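/- Let (X,ρ,W) be a hyperbolic space, C ⊆ X a convex subset with the UAFPP for nonexpansive functions, and (M,d) a bounded metric space with the AFPP for nonexpansive functions. Then H := (C × M)_∞ has the AFPP for nonexpansive functions. -/

import Mathlib

open Metric Set

/-- Krasnoselski-Mann iteration: x₀ := x, x_{n+1} := W(x_n, T(x_n), λ_n). -/
def KM {X : Type*} (W : X → X → ℝ → X) (T : X → X) (lam : ℕ → ℝ) (x : X) : ℕ → X
  | 0 => x
  | n + 1 => W (KM W T lam x n) (T (KM W T lam x n)) (lam n)

/-- M has the approximate fixed point property for nonexpansive mappings. -/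
def AFPP (M : Type*) [MetricSpace M] : Prop :=
  ∀ S : M → M, (∀ u v : M, dist (S u) (S v) ≤ dist u v) →
    sInf {r : ℝ | ∃ u : M, r = dist u (S u)} = 0

/-- C has the uniform approximate fixed point property for nonexpansive self-maps. -/
def UAFPP {X : Type*} [MetricSpace X] (C : Set X) : Prop :=
  ∀ ε > (0:ℝ), ∀ b > (0:ℝ), ∃ D > (0:ℝ), ∀ x ∈ C, ∀ S : X → X,
    (∀ y ∈ C, S y ∈ C) → (∀ y ∈ C, ∀ z ∈ C, dist (S y) (S z) ≤ dist y z) →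
    dist x (S x) ≤ b →
    ∃ xstar ∈ C, dist x xstar ≤ D ∧ dist xstar (S xstar) ≤ ε

private lemma two_pow_aux (m : ℕ) : (m:ℝ) + 2 ≤ 2 ^ m * 2 := by
  induction m with
  | zero => norm_num
  | succ k ih =>
    have h : (1:ℝ) ≤ 2 ^ k := one_le_pow₀ (by norm_num)
    push_cast
    rw [pow_succ]
    nlinarith

theorem uniformAR {X : Type*} [MetricSpace X]
    (W : X → X → ℝ → X)
    (hW1 : ∀ x y z : X, ∀ l ∈ Set.Icc (0:ℝ) 1,
      dist z (W x y l) ≤ (1 - l) * dist z x + l * dist z y)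
    (C : Set X)
    (hconv : ∀ x ∈ C, ∀ y ∈ C, ∀ l ∈ Set.Icc (0:ℝ) 1, W x y l ∈ C)
    (hCU : UAFPP C)
    (x₀ : X) (hx₀ : x₀ ∈ C) (b : ℝ) (hb : 0 < b)
    (ε : ℝ) (hε : 0 < ε) :
    ∃ N : ℕ, ∀ S : X → X, (∀ y ∈ C, S y ∈ C) →
      (∀ y ∈ C, ∀ z ∈ C, dist (S y) (S z) ≤ dist y z) →
      dist x₀ (S x₀) ≤ b →
      dist (KM W S (fun _ => (1:ℝ)/2) x₀ N) (S (KM W S (fun _ => (1:ℝ)/2) x₀ N)) ≤ ε := by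
  obtain ⟨D, hDpos, hD⟩ := hCU (ε/2) (by positivity) b hb
  obtain ⟨n, hn⟩ := exists_nat_ge ((2*D + b + 2) * 4 / ε)
  obtain ⟨K, hK⟩ := exists_nat_gt ((2:ℝ)^n * b / 2)
  have hnε : 2*D + b + 2 ≤ (n:ℝ) * ε / 4 := by
    rw [div_le_iff₀ hε] at hn
    linarith
  refine ⟨(K+1)*n, ?_⟩
  intro S hSC hSne hSb
  set x : ℕ → X := KM W S (fun _ => (1:ℝ)/2) x₀ with hxdef
  have hhalf : (1:ℝ)/2 ∈ Set.Icc (0:ℝ) 1 := by constructor <;> norm_num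
  have hx0 : x 0 = x₀ := by rw [hxdef]; simp [KM]
  have hxsucc : ∀ k, x (k+1) = W (x k) (S (x k)) (1/2) := by
    intro k; rw [hxdef]; simp [KM]
  have hxC : ∀ k, x k ∈ C := by
    intro k; induction k with
    | zero => rw [hx0]; exact hx₀
    | succ k ih => rw [hxsucc]; exact hconv _ ih _ (hSC _ ih) _ hhalf
  have hW1' : ∀ k (z : X), dist z (x (k+1)) ≤ (1/2) * dist z (x k) + (1/2) * dist z (S (x k)) := by
    intro k z
    have h := hW1 (x k) (S (x k)) z (1/2) hhalf
    rw [hxsucc]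
    linarith
  have hstep1 : ∀ k, dist (x k) (x (k+1)) ≤ dist (x k) (S (x k)) / 2 := by
    intro k
    have h := hW1' k (x k)
    rw [dist_self] at h
    linarith
  have hmono : ∀ k, dist (x (k+1)) (S (x (k+1))) ≤ dist (x k) (S (x k)) := by
    intro k
    have h1 : dist (x (k+1)) (S (x (k+1))) ≤ dist (x (k+1)) (S (x k)) + dist (S (x k)) (S (x (k+1))) :=
      dist_triangle _ _ _
    have h2 : dist (S (x k)) (S (x (k+1))) ≤ dist (x k) (x (k+1)) := hSne _ (hxC _) _ (hxC _)
    have h3 := hW1' k (S (x k))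
    rw [dist_self, dist_comm (S (x k)) (x k)] at h3
    have h4 := hstep1 k
    rw [dist_comm (x (k+1)) (S (x k))] at h1
    linarith
  have hmono2 : ∀ i m, dist (x (i+m)) (S (x (i+m))) ≤ dist (x i) (S (x i)) := by
    intro i m
    induction m with
    | zero => simp
    | succ m ih =>
      have e : i + (m+1) = (i+m) + 1 := rfl
      rw [e]
      exact le_trans (hmono (i+m)) ih
  have hmono' : ∀ i j, i ≤ j → dist (x j) (S (x j)) ≤ dist (x i) (S (x i)) := by
    intro i j hij
    obtain ⟨m, rfl⟩ := Nat.exists_eq_add_of_le hij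
    exact hmono2 i m
  have hrb : ∀ k, dist (x k) (S (x k)) ≤ b := by
    intro k
    refine le_trans (hmono' 0 k (Nat.zero_le k)) ?_
    rw [hx0]; exact hSb
  have hgap : ∀ i m, dist (x i) (x (i+m)) ≤ (m:ℝ) * dist (x i) (S (x i)) / 2 := by
    intro i m
    induction m with
    | zero => simp
    | succ m ih =>
      have e : i + (m+1) = (i+m) + 1 := rfl
      rw [e]
      have h1 : dist (x i) (x ((i+m)+1)) ≤ dist (x i) (x (i+m)) + dist (x (i+m)) (x ((i+m)+1)) :=
        dist_triangle _ _ _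
      have h2 := hstep1 (i+m)
      have h3 := hmono2 i m
      push_cast
      linarith
  -- Goebel-Kirk inequality
  have hGK : ∀ (m i : ℕ), (1 + (m:ℝ)/2) * dist (x i) (S (x i)) ≤
      dist (x i) (S (x (i+m))) + 2^m * (dist (x i) (S (x i)) - dist (x (i+m)) (S (x (i+m)))) := by
    intro m
    induction m with
    | zero =>
      intro i
      simp
    | succ m ih =>
      intro i
      have hA' := ih (i+1)
      have e : i + 1 + m = i + (m+1) := by omega
      rw [e] at hA'
      have hW := hW1' i (S (x (i+(m+1))))
      rw [dist_comm (S (x (i+(m+1)))) (x (i+1)), dist_comm (S (x (i+(m+1)))) (x i)] at hW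
      have hLip : dist (S (x (i+(m+1)))) (S (x i)) ≤ dist (x (i+(m+1))) (x i) :=
        hSne _ (hxC _) _ (hxC _)
      rw [dist_comm (x (i+(m+1))) (x i)] at hLip
      have hgap' := hgap i (m+1)
      have h2p := two_pow_aux m
      have hmn := hmono i
      have hmn2 := hmono2 i (m+1)
      have hnn : 0 ≤ dist (x i) (S (x i)) := dist_nonneg
      have hnn2 : 0 ≤ dist (x (i+(m+1))) (S (x (i+(m+1)))) := dist_nonneg
      have hint : (dist (x i) (S (x i)) - dist (x (i+1)) (S (x (i+1)))) *
          ((2:ℝ)^m * 2 - ((m:ℝ)+2)) ≥ 0 :=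
        mul_nonneg (by linarith) (by linarith)
      have hps : (2:ℝ)^(m+1) = 2^m * 2 := pow_succ 2 m
      push_cast at hgap' ⊢
      rw [hps]
      nlinarith [hA', hW, hLip, hgap', hint, hmn]
  -- Fejer-type drift bound
  have hfejer : ∀ p, p ∈ C → dist p (S p) ≤ ε/2 →
      ∀ i m, dist (x (i+m)) p ≤ dist (x i) p + (m:ℝ) * (ε/4) := by
    intro p hpC hpfix i m
    induction m with
    | zero => simp
    | succ m ih =>
      have e : i + (m+1) = (i+m) + 1 := rfl
      rw [e]
      have hW := hW1' (i+m) p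
      have h2 : dist p (S (x (i+m))) ≤ dist p (S p) + dist (S p) (S (x (i+m))) := dist_triangle _ _ _
      have h3 : dist (S p) (S (x (i+m))) ≤ dist p (x (i+m)) := hSne _ hpC _ (hxC _)
      rw [dist_comm p (x (i+m))] at h3
      rw [dist_comm p (x (i+m))] at hW
      rw [dist_comm p (x ((i+m)+1))] at hW
      push_cast
      linarith
  -- bound on dist (x i) (S (x (i+m)))
  have hB : ∀ i m, dist (x i) (S (x (i+m))) ≤ 2*D + (m:ℝ)*(ε/4) + b := by
    intro i m
    obtain ⟨p, hpC, hpd, hpfix⟩ := hD (x i) (hxC i) S hSC hSne (hrb i)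
    have hf := hfejer p hpC hpfix i m
    have h1 : dist (x i) (S (x (i+m))) ≤ dist (x i) (x (i+m)) + dist (x (i+m)) (S (x (i+m))) :=
      dist_triangle _ _ _
    have h2 : dist (x i) (x (i+m)) ≤ dist (x i) p + dist p (x (i+m)) := dist_triangle _ _ _
    rw [dist_comm p (x (i+m))] at h2
    have h3 := hrb (i+m)
    linarith
  -- main contradiction argument
  by_contra hcon
  push_neg at hcon
  have hεlt : ε < dist (x ((K+1)*n)) (S (x ((K+1)*n))) := hcon
  have h2npos : (0:ℝ) < 2^n := by positivity
  have hdec : ∀ j, j ≤ K+1 → (2:ℝ)^n * dist (x (j*n)) (S (x (j*n))) ≤ 2^n * b - 2*j := by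
    intro j hj
    induction j with
    | zero =>
      simp only [Nat.zero_mul, Nat.cast_zero]
      have := hrb 0
      nlinarith
    | succ j ih =>
      have hj' : j ≤ K+1 := by omega
      have ihj := ih hj'
      have hGKj := hGK n (j*n)
      have e : j*n + n = (j+1)*n := by ring
      rw [e] at hGKj
      have hBj := hB (j*n) n
      rw [e] at hBj
      have hrj : ε < dist (x (j*n)) (S (x (j*n))) :=
        lt_of_lt_of_le hεlt (hmono' (j*n) ((K+1)*n) (Nat.mul_le_mul_right n (by omega)))
      have hcoef : (0:ℝ) ≤ 1 + (n:ℝ)/2 := by positivity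
      have hkey : (1 + (n:ℝ)/2) * ε ≤ (1 + (n:ℝ)/2) * dist (x (j*n)) (S (x (j*n))) :=
        mul_le_mul_of_nonneg_left (le_of_lt hrj) hcoef
      -- (1+n/2)ε - (2D + nε/4 + b) ≥ ε + 2 ≥ 2
      have hdrop : 2 ≤ (2:ℝ)^n * (dist (x (j*n)) (S (x (j*n))) - dist (x ((j+1)*n)) (S (x ((j+1)*n)))) := by
        nlinarith [hGKj, hBj, hkey, hnε]
      push_cast
      push_cast at ihj
      nlinarith [hdrop, ihj]
  have hfin := hdec (K+1) (le_refl _)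
  have : (2:ℝ)^n * ε < 2^n * dist (x ((K+1)*n)) (S (x ((K+1)*n))) :=
    mul_lt_mul_of_pos_left hεlt h2npos
  push_cast at hfin
  nlinarith [hK, hε, h2npos]

/-- If C has the UAFPP and M is a bounded metric space with the AFPP, then
(C × M)_∞ has the AFPP for nonexpansive mappings. -/
theorem product_AFPP_of_UAFPP_and_bounded {X M : Type*} [MetricSpace X] [MetricSpace M]
    [Nonempty M] (W : X → X → ℝ → X)
    (hW1 : ∀ x y z : X, ∀ l ∈ Set.Icc (0:ℝ) 1,
      dist z (W x y l) ≤ (1 - l) * dist z x + l * dist z y)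
    (hW2 : ∀ x y : X, ∀ l ∈ Set.Icc (0:ℝ) 1, ∀ l' ∈ Set.Icc (0:ℝ) 1,
      dist (W x y l) (W x y l') = |l - l'| * dist x y)
    (hW3 : ∀ x y : X, ∀ l ∈ Set.Icc (0:ℝ) 1, W x y l = W y x (1 - l))
    (hW4 : ∀ x y z w : X, ∀ l ∈ Set.Icc (0:ℝ) 1,
      dist (W x z l) (W y w l) ≤ (1 - l) * dist x y + l * dist z w)
    (C : Set X) (hC : C.Nonempty)
    (hconv : ∀ x ∈ C, ∀ y ∈ C, ∀ l ∈ Set.Icc (0:ℝ) 1, W x y l ∈ C)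
    (hCU : UAFPP C)
    (hMbdd : ∃ b : ℝ, ∀ u v : M, dist u v ≤ b)
    (hM : AFPP M) :
    ∀ T : X × M → X × M,
      (∀ x ∈ C, ∀ u : M, (T (x, u)).1 ∈ C) →
      (∀ p q : X × M, p.1 ∈ C → q.1 ∈ C → dist (T p) (T q) ≤ dist p q) →
      sInf {r : ℝ | ∃ x ∈ C, ∃ u : M, r = dist (x, u) (T (x, u))} = 0 := by
  intro T hTC hT
  obtain ⟨x₀, hx₀⟩ := hC
  obtain ⟨bM, hbM⟩ := hMbdd
  have hbM0 : 0 ≤ bM := le_trans dist_nonneg (hbM (Classical.arbitrary M) (Classical.arbitrary M))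
  set u₀ : M := Classical.arbitrary M with hu₀
  have hfst : ∀ p q : X × M, dist p.1 q.1 ≤ dist p q := by
    intro p q; rw [Prod.dist_eq]; exact le_max_left _ _
  have hsnd : ∀ p q : X × M, dist p.2 q.2 ≤ dist p q := by
    intro p q; rw [Prod.dist_eq]; exact le_max_right _ _
  set b : ℝ := dist x₀ ((T (x₀, u₀)).1) + bM + 1 with hbdef
  have hb : 0 < b := by
    have := dist_nonneg (x := x₀) (y := (T (x₀, u₀)).1)
    rw [hbdef]; linarith
  -- uniform bound for all slices
  have hbu : ∀ u : M, dist x₀ ((T (x₀, u)).1) ≤ b := by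
    intro u
    have h1 : dist x₀ ((T (x₀, u)).1) ≤ dist x₀ ((T (x₀, u₀)).1) +
        dist ((T (x₀, u₀)).1) ((T (x₀, u)).1) := dist_triangle _ _ _
    have h2 : dist ((T (x₀, u₀)).1) ((T (x₀, u)).1) ≤ dist (T (x₀, u₀)) (T (x₀, u)) :=
      hfst _ _
    have h3 : dist (T (x₀, u₀)) (T (x₀, u)) ≤ dist ((x₀, u₀) : X × M) (x₀, u) :=
      hT _ _ hx₀ hx₀
    have h4 : dist ((x₀, u₀) : X × M) (x₀, u) = dist u₀ u := by
      rw [Prod.dist_eq]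
      simp [dist_self]
    have h5 : dist u₀ u ≤ bM := hbM _ _
    rw [hbdef]
    rw [h4] at h3
    linarith
  -- slice nonexpansiveness in x
  have hTune : ∀ u : M, ∀ y ∈ C, ∀ z ∈ C,
      dist ((T (y, u)).1) ((T (z, u)).1) ≤ dist y z := by
    intro u y hy z hz
    have h1 : dist ((T (y, u)).1) ((T (z, u)).1) ≤ dist (T (y, u)) (T (z, u)) := hfst _ _
    have h2 : dist (T (y, u)) (T (z, u)) ≤ dist ((y, u) : X × M) (z, u) := hT _ _ hy hz
    have h3 : dist ((y, u) : X × M) (z, u) = dist y z := by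
      rw [Prod.dist_eq]
      simp [dist_self]
    rw [h3] at h2
    linarith
  -- the set and its basic properties
  set A : Set ℝ := {r : ℝ | ∃ x ∈ C, ∃ u : M, r = dist (x, u) (T (x, u))} with hAdef
  have hAne : A.Nonempty := ⟨dist ((x₀, u₀) : X × M) (T (x₀, u₀)), x₀, hx₀, u₀, rfl⟩
  have hA0 : ∀ r ∈ A, (0:ℝ) ≤ r := by
    rintro r ⟨x, hx, u, rfl⟩
    exact dist_nonneg
  have hbdd : BddBelow A := ⟨0, hA0⟩
  -- key: for every ε > 0 there is an element of A below ε
  have key : ∀ ε : ℝ, 0 < ε → ∃ r ∈ A, r ≤ ε := by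
    intro ε hε
    obtain ⟨N, hN⟩ := uniformAR W hW1 C hconv hCU x₀ hx₀ b hb ε hε
    set seq : M → ℕ → X := fun u => KM W (fun x => (T (x, u)).1) (fun _ => (1:ℝ)/2) x₀
      with hseqdef
    have hhalf : (1:ℝ)/2 ∈ Set.Icc (0:ℝ) 1 := by constructor <;> norm_num
    have hseq0 : ∀ u, seq u 0 = x₀ := by intro u; rw [hseqdef]; simp [KM]
    have hseqsucc : ∀ u k, seq u (k+1) = W (seq u k) ((T (seq u k, u)).1) (1/2) := by
      intro u k; rw [hseqdef]; simp [KM]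
    have hseqC : ∀ u k, seq u k ∈ C := by
      intro u k
      induction k with
      | zero => rw [hseq0]; exact hx₀
      | succ k ih =>
        rw [hseqsucc]
        exact hconv _ ih _ (hTC _ ih u) _ hhalf
    -- nonexpansive dependence on the parameter u
    have hseqlip : ∀ k (u v : M), dist (seq u k) (seq v k) ≤ dist u v := by
      intro k
      induction k with
      | zero => intro u v; rw [hseq0, hseq0, dist_self]; exact dist_nonneg
      | succ k ih =>
        intro u v
        rw [hseqsucc, hseqsucc]
        have h1 := hW4 (seq u k) (seq v k) ((T (seq u k, u)).1) ((T (seq v k, v)).1) (1/2) hhalf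
        have h2 : dist ((T (seq u k, u)).1) ((T (seq v k, v)).1) ≤
            dist (T (seq u k, u)) (T (seq v k, v)) := hfst _ _
        have h3 : dist (T (seq u k, u)) (T (seq v k, v)) ≤
            dist ((seq u k, u) : X × M) (seq v k, v) := hT _ _ (hseqC u k) (hseqC v k)
        have h4 : dist ((seq u k, u) : X × M) (seq v k, v) ≤ dist u v := by
          rw [Prod.dist_eq]
          exact max_le (ih u v) (le_refl _)
        have h5 := ih u v
        linarith
    -- approximate fixed point in the X coordinate, uniformly in u
    have hxfix : ∀ u : M, dist (seq u N) ((T (seq u N, u)).1) ≤ ε := by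
      intro u
      exact hN (fun x => (T (x, u)).1) (fun y hy => hTC y hy u) (hTune u) (hbu u)
    -- build the nonexpansive map on M
    set S : M → M := fun u => (T (seq u N, u)).2 with hSdef
    have hSne : ∀ u v : M, dist (S u) (S v) ≤ dist u v := by
      intro u v
      have h1 : dist (S u) (S v) ≤ dist (T (seq u N, u)) (T (seq v N, v)) := hsnd _ _
      have h2 : dist (T (seq u N, u)) (T (seq v N, v)) ≤
          dist ((seq u N, u) : X × M) (seq v N, v) := hT _ _ (hseqC u N) (hseqC v N)
      have h3 : dist ((seq u N, u) : X × M) (seq v N, v) ≤ dist u v := by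
        rw [Prod.dist_eq]
        exact max_le (hseqlip N u v) (le_refl _)
      linarith
    have hSinf := hM S hSne
    have hSne' : Set.Nonempty {r : ℝ | ∃ u : M, r = dist u (S u)} :=
      ⟨dist u₀ (S u₀), u₀, rfl⟩
    obtain ⟨r, ⟨u, hru⟩, hrε⟩ := exists_lt_of_csInf_lt hSne' (by rw [hSinf]; exact hε)
    refine ⟨dist ((seq u N, u) : X × M) (T (seq u N, u)), ⟨seq u N, hseqC u N, u, rfl⟩, ?_⟩
    rw [Prod.dist_eq]
    refine max_le (hxfix u) ?_
    have : dist u ((T (seq u N, u)).2) = r := by rw [hru]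
    linarith
  -- conclude sInf A = 0
  refine le_antisymm ?_ (le_csInf hAne hA0)
  by_contra h
  push_neg at h
  obtain ⟨r, hrA, hrle⟩ := key (sInf A / 2) (by linarith)
  have := csInf_le hbdd hrA
  linarith
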